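/- arXiv:2602.03684 — 2 statements merged into one kernel-verified Lean document; each statement's English description precedes it below -/
import Mathlib

section
/- Fix y ∈ ℝ³ with ‖y‖ = 1, and let U = {x ∈ ℝ³ : −1 < x·y < 1}. The function F : U → ℝ, F(x) = −(1/(2π)) ln(sin(½ arccos(x·y))), is differentiable on U and its gradient at x ∈ U equals ∇F(x) = y/(4π(1 − x·y)). Consequently, for every x ∈ U, x × ∇F(x) = (1/(4π)) (x × y)/(1 − x·y). -/
open Real RealInnerProductSpace

/-- The cross product on `ℝ³ = EuclideanSpace ℝ (Fin 3)`. -/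
noncomputable def crossE (a b : EuclideanSpace ℝ (Fin 3)) : EuclideanSpace ℝ (Fin 3) :=
  (WithLp.equiv 2 (Fin 3 → ℝ)).symm
    (crossProduct (WithLp.equiv 2 (Fin 3 → ℝ) a) (WithLp.equiv 2 (Fin 3 → ℝ) b))

/-- Lemma 46: for a unit vector `y ∈ ℝ³` and `x` with `−1 < x·y < 1`, the spherical Green's
function `F(x) = −(1/(2π)) ln(sin(½ arccos(x·y)))` is differentiable at `x` with gradient
`∇F(x) = y/(4π(1 − x·y))`; consequently `x × ∇F(x) = (1/(4π)) (x × y)/(1 − x·y)`. -/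
theorem spherical_green_gradient (y : EuclideanSpace ℝ (Fin 3)) (hy : ‖y‖ = 1)
    (x : EuclideanSpace ℝ (Fin 3)) (hx1 : -1 < ⟪x, y⟫) (hx2 : ⟪x, y⟫ < 1) :
    DifferentiableAt ℝ
      (fun z => -(1 / (2 * π)) * Real.log (Real.sin ((1 / 2) * Real.arccos ⟪z, y⟫))) x ∧
    gradient (fun z => -(1 / (2 * π)) * Real.log (Real.sin ((1 / 2) * Real.arccos ⟪z, y⟫))) x
      = (4 * π * (1 - ⟪x, y⟫))⁻¹ • y ∧
    crossE x (gradient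
        (fun z => -(1 / (2 * π)) * Real.log (Real.sin ((1 / 2) * Real.arccos ⟪z, y⟫))) x)
      = (1 / (4 * π)) • (1 - ⟪x, y⟫)⁻¹ • crossE x y := by
  have hπ : (π : ℝ) ≠ 0 := Real.pi_ne_zero
  set F : EuclideanSpace ℝ (Fin 3) → ℝ :=
    fun z => -(1 / (2 * π)) * Real.log (Real.sin ((1 / 2) * Real.arccos ⟪z, y⟫)) with hF
  set G : EuclideanSpace ℝ (Fin 3) → ℝ :=
    fun z => -(1 / (4 * π)) * Real.log ((1 - ⟪z, y⟫) / 2) with hG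
  have hinner_cont : Continuous fun z : EuclideanSpace ℝ (Fin 3) => ⟪z, y⟫ :=
    continuous_id.inner continuous_const
  have hs : {z : EuclideanSpace ℝ (Fin 3) | ⟪z, y⟫ ∈ Set.Ioo (-1 : ℝ) 1} ∈ nhds x :=
    (isOpen_Ioo.preimage hinner_cont).mem_nhds ⟨hx1, hx2⟩
  have hFG : F =ᶠ[nhds x] G := by
    filter_upwards [hs] with z hz
    obtain ⟨h1, h2⟩ := hz
    have hsin : Real.sin ((1 / 2) * Real.arccos ⟪z, y⟫)
        = Real.sqrt ((1 - ⟪z, y⟫) / 2) := by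
      rw [show (1 / 2 : ℝ) * Real.arccos ⟪z, y⟫ = Real.arccos ⟪z, y⟫ / 2 by ring,
        Real.sin_half_eq_sqrt (Real.arccos_nonneg _)
          (le_trans (Real.arccos_le_pi _) (by linarith [Real.pi_pos])),
        Real.cos_arccos h1.le h2.le]
    have hpos : (0 : ℝ) ≤ (1 - ⟪z, y⟫) / 2 := by linarith
    simp only [hF, hG, hsin, Real.log_sqrt hpos]
    ring
  set t : ℝ := ⟪x, y⟫ with htdef
  have ht1 : (1 : ℝ) - t ≠ 0 := sub_ne_zero.mpr (ne_of_lt hx2).symm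
  have hderiv : HasDerivAt (fun s : ℝ => -(1 / (4 * π)) * Real.log ((1 - s) / 2))
      ((4 * π * (1 - t))⁻¹) t := by
    have h1 : HasDerivAt (fun s : ℝ => (1 - s) / 2) (-1/2) t := by
      simpa using ((hasDerivAt_id t).const_sub 1).div_const 2
    have hne : ((1 : ℝ) - t) / 2 ≠ 0 := by
      simpa using div_ne_zero ht1 two_ne_zero
    have h2 := (h1.log hne).const_mul (-(1 / (4 * π)))
    refine h2.congr_deriv ?_
    field_simp
  -- gradient of G
  have hGgrad : HasGradientAt G ((4 * π * (1 - t))⁻¹ • y) x := by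
    have hlin : HasFDerivAt (fun z : EuclideanSpace ℝ (Fin 3) => ⟪z, y⟫)
        (innerSL ℝ y) x := by
      have : (fun z : EuclideanSpace ℝ (Fin 3) => ⟪z, y⟫)
          = fun z => innerSL ℝ y z := by
        funext z
        simp only [innerSL_apply_apply]
        exact real_inner_comm y z
      rw [this]
      exact (innerSL ℝ y).hasFDerivAt
    have hcomp : HasFDerivAt G ((4 * π * (1 - t))⁻¹ • innerSL ℝ y) x := by
      have := hderiv.comp_hasFDerivAt x hlin; exact this
    rw [hasGradientAt_iff_hasFDerivAt]
    refine hcomp.congr_fderiv ?_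
    apply ContinuousLinearMap.ext
    intro v
    simp [InnerProductSpace.toDual_apply_apply, real_inner_smul_left]
  have hFgrad : HasGradientAt F ((4 * π * (1 - t))⁻¹ • y) x := by
    rw [hasGradientAt_iff_hasFDerivAt] at hGgrad ⊢
    exact hGgrad.congr_of_eventuallyEq hFG
  have hgradeq : gradient F x = (4 * π * (1 - t))⁻¹ • y := hFgrad.gradient
  refine ⟨hFgrad.hasFDerivAt.differentiableAt, hgradeq, ?_⟩
  rw [hgradeq]
  -- cross product linearity
  have hcross : ∀ (c : ℝ) (b : EuclideanSpace ℝ (Fin 3)),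
      crossE x (c • b) = c • crossE x b := by
    intro c b
    simp only [crossE]
    have : (WithLp.equiv 2 (Fin 3 → ℝ)) (c • b) = c • (WithLp.equiv 2 (Fin 3 → ℝ)) b := by
      simp
    rw [this, LinearMap.map_smul]
    simp
  rw [hcross, smul_smul]
  congr 1
  rw [mul_inv]
  ring
end

section
/- Let p₁, p₂ ∈ ℝ³ be distinct unit vectors with p₁·p₂ < 1, carrying vortex strengths ω₁ = −ω and ω₂ = ω for some ω ∈ ℝ. Then the two vortex velocities of the spherical point-vortex dynamics coincide: u(p₁) := (ω₂/(4π)) (p₁ × p₂)/(1 − p₁·p₂) and u(p₂) := (ω₁/(4π)) (p₂ × p₁)/(1 − p₂·p₁) satisfy u(p₁) = u(p₂) = (ω/(4π)) (p₁ × p₂)/(1 − p₁·p₂), and this common velocity is orthogonal to both p₁ and p₂. -/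
open Real RealInnerProductSpace

lemma inner_crossE_self_left (a b : EuclideanSpace ℝ (Fin 3)) : ⟪crossE a b, a⟫ = 0 := by
  simp [crossE, crossProduct, PiLp.inner_apply, Fin.sum_univ_three]
  ring

lemma inner_crossE_self_right (a b : EuclideanSpace ℝ (Fin 3)) : ⟪crossE a b, b⟫ = 0 := by
  simp [crossE, crossProduct, PiLp.inner_apply, Fin.sum_univ_three]
  ring

/-- Kimura's conjecture on the sphere (section 6.2): for distinct unit vectors `p₁, p₂` with
`p₁·p₂ < 1`, carrying strengths `ω₁ = −ω`, `ω₂ = ω`, the two spherical vortex velocities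
`u(p₁) = (ω₂/(4π)) (p₁ × p₂)/(1 − p₁·p₂)` and `u(p₂) = (ω₁/(4π)) (p₂ × p₁)/(1 − p₂·p₁)`
coincide, equal `(ω/(4π)) (p₁ × p₂)/(1 − p₁·p₂)`, and are orthogonal to both `p₁` and `p₂`. -/
theorem spherical_vortex_pair_geodesic (p₁ p₂ : EuclideanSpace ℝ (Fin 3))
    (hp₁ : ‖p₁‖ = 1) (hp₂ : ‖p₂‖ = 1) (hne : p₁ ≠ p₂) (hdot : ⟪p₁, p₂⟫ < 1) (ω : ℝ) :
    (ω / (4 * π)) • (1 - ⟪p₁, p₂⟫)⁻¹ • crossE p₁ p₂ =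
        ((-ω) / (4 * π)) • (1 - ⟪p₂, p₁⟫)⁻¹ • crossE p₂ p₁ ∧
    ⟪(ω / (4 * π)) • (1 - ⟪p₁, p₂⟫)⁻¹ • crossE p₁ p₂, p₁⟫ = 0 ∧
    ⟪(ω / (4 * π)) • (1 - ⟪p₁, p₂⟫)⁻¹ • crossE p₁ p₂, p₂⟫ = 0 := by
  have hanti : crossE p₂ p₁ = -crossE p₁ p₂ := by
    unfold crossE
    simp [crossProduct]
    ext i
    fin_cases i <;> simp <;> ring
  have hsym : ⟪p₂, p₁⟫ = ⟪p₁, p₂⟫ := real_inner_comm _ _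
  refine ⟨?_, ?_, ?_⟩
  · rw [hanti, hsym]; simp [neg_div, neg_smul, smul_neg]
  · rw [real_inner_smul_left, real_inner_smul_left, inner_crossE_self_left, mul_zero, mul_zero]
  · rw [real_inner_smul_left, real_inner_smul_left, inner_crossE_self_right, mul_zero, mul_zero]
end
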